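/- The proper rope cover of a finite set of arcs (viewed as unordered endpoint pairs, all distinct) is unique: if R1 and R2 are both proper rope covers of E, then R1 = R2. -/
import Mathlib


/-- An arc is represented as a pair `(l, r)` with `l < r` (an unordered pair of endpoints).
Arc `a` leans on arc `b` if `l_b ≤ l_a < r_a ≤ r_b`, `a ≠ b`, and `l_a = l_b` or `r_a = r_b`. -/
def leansOn (a b : ℕ × ℕ) : Prop :=
  b.1 ≤ a.1 ∧ a.1 < a.2 ∧ a.2 ≤ b.2 ∧ a ≠ b ∧ (a.1 = b.1 ∨ a.2 = b.2)

def IsRopeCover (E R : Finset (ℕ × ℕ)) : Prop :=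
  R ⊆ E ∧ ∀ a ∈ E \ R, ∃ b ∈ R, leansOn a b

def IsProper (R : Finset (ℕ × ℕ)) : Prop := ∀ a ∈ R, ∀ b ∈ R, ¬ leansOn a b

/-- The proper rope cover of a finite set of arcs is unique. -/
theorem proper_ropeCover_unique (E : Finset (ℕ × ℕ)) (hE : ∀ a ∈ E, a.1 < a.2)
    (R1 R2 : Finset (ℕ × ℕ))
    (h1 : IsRopeCover E R1) (h1p : IsProper R1)
    (h2 : IsRopeCover E R2) (h2p : IsProper R2) :
    R1 = R2 := by
  by_contra hne
  have hS : ((R1 \ R2) ∪ (R2 \ R1)).Nonempty := by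
    by_contra h
    rw [Finset.not_nonempty_iff_eq_empty, Finset.union_eq_empty] at h
    obtain ⟨h12, h21⟩ := h
    rw [Finset.sdiff_eq_empty_iff_subset] at h12 h21
    exact hne (le_antisymm h12 h21)
  obtain ⟨a, haS, hamax⟩ := Finset.exists_max_image _ (fun p => p.2 - p.1) hS
  have key : ∀ (Ra Rb : Finset (ℕ × ℕ)), IsRopeCover E Ra → IsProper Ra →
      IsRopeCover E Rb → a ∈ Ra \ Rb → ∃ b ∈ Rb \ Ra, a.2 - a.1 < b.2 - b.1 := by
    intro Ra Rb hRa hpa hRb ha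
    rw [Finset.mem_sdiff] at ha
    have haE : a ∈ E := hRa.1 ha.1
    obtain ⟨b, hb, hl⟩ := hRb.2 a (Finset.mem_sdiff.mpr ⟨haE, ha.2⟩)
    have hbRa : b ∉ Ra := fun hb' => hpa a ha.1 b hb' hl
    refine ⟨b, Finset.mem_sdiff.mpr ⟨hb, hbRa⟩, ?_⟩
    obtain ⟨hl1, hl2, hl3, hl4, hl5⟩ := hl
    have hne' : a.1 ≠ b.1 ∨ a.2 ≠ b.2 := by
      by_contra h
      push_neg at h
      exact hl4 (Prod.ext h.1 h.2)
    omega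
  rcases Finset.mem_union.mp haS with ha | ha
  · obtain ⟨b, hb, hlt⟩ := key R1 R2 h1 h1p h2 ha
    have := hamax b (Finset.mem_union_right _ hb)
    omega
  · obtain ⟨b, hb, hlt⟩ := key R2 R1 h2 h2p h1 ha
    have := hamax b (Finset.mem_union_left _ hb)
    omega
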